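/- Let ρ be a density matrix on ℂ^m ⊗ ℂ^n that is not classical-quantum, let e : Fin m → (Fin m → ℂ) be an orthonormal basis of ℂ^m consisting of eigenvectors of the partial trace tr_B ρ, and let D(ρ) = ∑_i ((e_i e_i*) ⊗ I_n) ρ ((e_i e_i*) ⊗ I_n) be the dephasing of ρ in this basis. Then D(ρ) ≠ ρ and tr_B(D(ρ)) = tr_B ρ. (Thus the quantum-house effect — a local operation on subsystem A that changes the state of AB but not the state of A — can be achieved with any state of nonzero quantum discord.) -/

import Mathlib

open Matrix Kronecker BigOperators ComplexOrder

noncomputable section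

/-- Partial trace over the second factor. -/
def trB {m n : ℕ} (ρ : Matrix (Fin m × Fin n) (Fin m × Fin n) ℂ) :
    Matrix (Fin m) (Fin m) ℂ :=
  fun i j => ∑ k : Fin n, ρ (i, k) (j, k)

/-- A density matrix: positive semidefinite with trace 1. -/
def IsDensityMatrix {d : Type*} [Fintype d] [DecidableEq d] (ρ : Matrix d d ℂ) : Prop :=
  ρ.PosSemidef ∧ ρ.trace = 1

/-- An orthonormal basis of ℂ^m, given as a family of m vectors. -/
def IsONB {m : ℕ} (e : Fin m → Fin m → ℂ) : Prop :=
  ∀ i j, star (e i) ⬝ᵥ e j = if i = j then 1 else 0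

/-- The rank-one matrix v v*, with entries v j * conj (v k). -/
def proj {m : ℕ} (v : Fin m → ℂ) : Matrix (Fin m) (Fin m) ℂ :=
  vecMulVec v (star v)

/-- A classical-quantum (zero-discord) state: ρ = ∑ i (eᵢ eᵢ*) ⊗ σᵢ for an
orthonormal basis e of ℂ^m and positive semidefinite σᵢ. -/
def ClassicalQuantum {m n : ℕ} (ρ : Matrix (Fin m × Fin n) (Fin m × Fin n) ℂ) : Prop :=
  ∃ e : Fin m → Fin m → ℂ, IsONB e ∧
    ∃ σ : Fin m → Matrix (Fin n) (Fin n) ℂ,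
      (∀ i, (σ i).PosSemidef) ∧ ρ = ∑ i, proj (e i) ⊗ₖ σ i

/-- the block σ_v -/
def sig {m n : ℕ} (ρ : Matrix (Fin m × Fin n) (Fin m × Fin n) ℂ) (v : Fin m → ℂ) :
    Matrix (Fin n) (Fin n) ℂ :=
  fun k l => ∑ a, ∑ b, star (v a) * ρ (a, k) (b, l) * v b

lemma blockform {m n : ℕ} (ρ : Matrix (Fin m × Fin n) (Fin m × Fin n) ℂ) (v : Fin m → ℂ) :
    (proj v ⊗ₖ (1 : Matrix (Fin n) (Fin n) ℂ)) * ρ * (proj v ⊗ₖ (1 : Matrix (Fin n) (Fin n) ℂ))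
    = proj v ⊗ₖ sig ρ v := by
  ext ⟨a, k⟩ ⟨b, l⟩
  simp only [Matrix.mul_apply, kroneckerMap_apply, proj, vecMulVec_apply, Pi.star_apply,
    one_apply, Fintype.sum_prod_type, sig, mul_ite, mul_zero, mul_one, ite_mul, zero_mul,
    Finset.sum_ite_eq', Finset.sum_ite_eq, Finset.mem_univ, if_true, Finset.mul_sum,
    Finset.sum_mul]
  rw [Finset.sum_comm]
  refine Finset.sum_congr rfl fun c _ => Finset.sum_congr rfl fun d _ => ?_
  ring

lemma sig_posSemidef {m n : ℕ} (ρ : Matrix (Fin m × Fin n) (Fin m × Fin n) ℂ)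
    (hρ : ρ.PosSemidef) (v : Fin m → ℂ) : (sig ρ v).PosSemidef := by
  have : sig ρ v = (Matrix.of fun (p : Fin m × Fin n) (l : Fin n) =>
      v p.1 * (if p.2 = l then (1:ℂ) else 0))ᴴ * ρ *
      (Matrix.of fun (p : Fin m × Fin n) (l : Fin n) =>
      v p.1 * (if p.2 = l then (1:ℂ) else 0)) := by
    ext k l
    simp only [Matrix.mul_apply, conjTranspose_apply, of_apply, Fintype.sum_prod_type, sig,
      star_mul', apply_ite (star : ℂ → ℂ), star_one, star_zero, mul_ite, mul_zero, mul_one,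
      ite_mul, zero_mul, Finset.sum_ite_eq', Finset.sum_ite_eq, Finset.mem_univ, if_true,
      Finset.mul_sum, Finset.sum_mul]
    exact Finset.sum_comm
  rw [this]
  exact hρ.conjTranspose_mul_mul_same _

lemma completeness {m : ℕ} (e : Fin m → Fin m → ℂ) (he : IsONB e) :
    ∑ i, proj (e i) = 1 := by
  have h1 : (Matrix.of fun i j => e j i)ᴴ * (Matrix.of fun i j => e j i) = 1 := by
    ext i j
    simpa [Matrix.mul_apply, conjTranspose_apply, dotProduct, one_apply] using he i j
  have h2 := mul_eq_one_comm.mp h1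
  ext a b
  have := congrFun (congrFun h2 a) b
  simpa [Matrix.mul_apply, conjTranspose_apply, proj, vecMulVec_apply,
    Matrix.sum_apply] using this

lemma trace_sig {m n : ℕ} (ρ : Matrix (Fin m × Fin n) (Fin m × Fin n) ℂ) (v : Fin m → ℂ) :
    ∑ k, sig ρ v k k = star v ⬝ᵥ (trB ρ *ᵥ v) := by
  simp only [sig, dotProduct, mulVec, trB, Pi.star_apply, Finset.mul_sum, Finset.sum_mul]
  rw [Finset.sum_comm]
  refine Finset.sum_congr rfl fun a _ => ?_
  rw [Finset.sum_comm]
  refine Finset.sum_congr rfl fun b _ => Finset.sum_congr rfl fun k _ => ?_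
  ring

lemma trB_sum {m n ι : ℕ} (A : Fin ι → Matrix (Fin m × Fin n) (Fin m × Fin n) ℂ) :
    trB (∑ i, A i) = ∑ i, trB (A i) := by
  ext a b
  simp only [trB, Matrix.sum_apply]
  exact Finset.sum_comm

theorem part2 {m n : ℕ} (ρ : Matrix (Fin m × Fin n) (Fin m × Fin n) ℂ)
    (e : Fin m → Fin m → ℂ) (he : IsONB e)
    (heig : ∀ i, ∃ c : ℂ, (trB ρ) *ᵥ e i = c • e i) :
    trB (∑ i, (proj (e i) ⊗ₖ (1 : Matrix (Fin n) (Fin n) ℂ)) * ρ *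
        (proj (e i) ⊗ₖ (1 : Matrix (Fin n) (Fin n) ℂ))) = trB ρ := by
  choose c hc using heig
  have hci : ∀ i, star (e i) ⬝ᵥ (trB ρ *ᵥ e i) = c i := by
    intro i
    rw [hc i, dotProduct_smul, he i i, if_pos rfl, smul_eq_mul, mul_one]
  have htrB : trB ρ = ∑ i, c i • proj (e i) := by
    have h1 : trB ρ = trB ρ * ∑ i, proj (e i) := by rw [completeness e he, mul_one]
    rw [h1, Finset.mul_sum]
    refine Finset.sum_congr rfl fun i _ => ?_
    ext a b
    have h2 : ∑ x, trB ρ a x * e i x = c i * e i a := by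
      simpa [mulVec, dotProduct] using congrFun (hc i) a
    simp only [Matrix.mul_apply, proj, vecMulVec_apply, Pi.star_apply, Matrix.smul_apply,
      smul_eq_mul]
    rw [show (∑ x, trB ρ a x * (e i x * star (e i b)))
        = (∑ x, trB ρ a x * e i x) * star (e i b) by rw [Finset.sum_mul]; exact Finset.sum_congr rfl fun x _ => by ring, h2]
    ring
  have hD : ∀ i, trB ((proj (e i) ⊗ₖ (1 : Matrix (Fin n) (Fin n) ℂ)) * ρ *
      (proj (e i) ⊗ₖ (1 : Matrix (Fin n) (Fin n) ℂ))) = c i • proj (e i) := by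
    intro i
    rw [blockform]
    ext a b
    have h3 : ∑ k, sig ρ (e i) k k = c i := by rw [trace_sig]; exact hci i
    simp only [trB, kroneckerMap_apply, Matrix.smul_apply, smul_eq_mul, ← Finset.mul_sum, h3]
    ring
  rw [trB_sum, htrB]
  exact Finset.sum_congr rfl fun i _ => hD i

theorem stmt0 {m n : ℕ} (ρ : Matrix (Fin m × Fin n) (Fin m × Fin n) ℂ)
    (hρ : IsDensityMatrix ρ) (hcq : ¬ ClassicalQuantum ρ)
    (e : Fin m → Fin m → ℂ) (he : IsONB e)
    (heig : ∀ i, ∃ c : ℂ, (trB ρ) *ᵥ e i = c • e i) :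
    (∑ i, (proj (e i) ⊗ₖ (1 : Matrix (Fin n) (Fin n) ℂ)) * ρ *
        (proj (e i) ⊗ₖ (1 : Matrix (Fin n) (Fin n) ℂ))) ≠ ρ ∧
    trB (∑ i, (proj (e i) ⊗ₖ (1 : Matrix (Fin n) (Fin n) ℂ)) * ρ *
        (proj (e i) ⊗ₖ (1 : Matrix (Fin n) (Fin n) ℂ))) = trB ρ := by
  constructor
  · intro h
    exact hcq ⟨e, he, fun i => sig ρ (e i), fun i => sig_posSemidef ρ hρ.1 (e i),
      h.symm.trans (Finset.sum_congr rfl fun i _ => blockform ρ (e i))⟩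
  · exact part2 ρ e he heig
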